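/- Let k > 1 be an integer, α = 4(1 − k⁻²), ϑ > 0, and let F₁, F₂ : ℝ → ℝ be differentiable functions satisfying F₁(z)F₂′(z) − F₁′(z)F₂(z) = −1 for all z ∈ ℝ. Define the vector fields on ℝ²: f₁(x) = √(ϑα)·(F₁(Ĵ(x)), 0), f₂(x) = √(ϑα)·(F₂(Ĵ(x)), 0), f₃(x) = √(ϑα)·(0, F₁(Ĵ(x))), f₄(x) = √(ϑα)·(0, F₂(Ĵ(x))), the 2πk-periodic signals v₁(θ) = cos θ · cos(θ/k), v₂(θ) = sin θ · cos(θ/k), v₃(θ) = cos θ · sin(θ/k), v₄(θ) = sin θ · sin(θ/k), and the averaging coefficients ν_{ij} = (1/(2πk)) ∫₀^{2πk} v_j(θ) (∫₀^θ v_i(τ) dτ) dθ for 1 ≤ i < j ≤ 4. Let G(x) = Σ_{1 ≤ i < j ≤ 4} ν_{ij} [f_i, f_j](x). Then for every x ∈ ℝ², the inner product ⟨G(x), ∇Ĵ(x)⟩ equals −ϑ ‖∇Ĵ(x)‖². -/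

import Mathlib

/-- Euclidean inner product on ℝ². -/
def dot2 (a b : ℝ × ℝ) : ℝ := a.1 * b.1 + a.2 * b.2

/-- Lie bracket of two vector fields on ℝ²: [f,g](x) = Dg(x)f(x) − Df(x)g(x). -/
noncomputable def lieBracket (f g : ℝ × ℝ → ℝ × ℝ) (x : ℝ × ℝ) : ℝ × ℝ :=
  fderiv ℝ g x (f x) - fderiv ℝ f x (g x)

/-- Gradient of a scalar function on ℝ²: (∂₁J, ∂₂J). -/
noncomputable def grad2 (J : ℝ × ℝ → ℝ) (x : ℝ × ℝ) : ℝ × ℝ :=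
  (fderiv ℝ J x (1, 0), fderiv ℝ J x (0, 1))

/-- The 2πk-periodic dither signals v₁, v₂, v₃, v₄. -/
noncomputable def dither (k : ℕ) : Fin 4 → ℝ → ℝ
  | 0 => fun θ => Real.cos θ * Real.cos (θ / k)
  | 1 => fun θ => Real.sin θ * Real.cos (θ / k)
  | 2 => fun θ => Real.cos θ * Real.sin (θ / k)
  | 3 => fun θ => Real.sin θ * Real.sin (θ / k)

/-- Averaging coefficient ν_{ij} = (1/(2πk)) ∫₀^{2πk} v_j(θ) (∫₀^θ v_i(τ) dτ) dθ. -/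
noncomputable def avgCoeff (k : ℕ) (i j : Fin 4) : ℝ :=
  (1 / (2 * Real.pi * k)) *
    ∫ θ in (0:ℝ)..(2 * Real.pi * k), dither k j θ * ∫ τ in (0:ℝ)..θ, dither k i τ

/-- The four extremum-seeking vector fields: f₁ = √c·(F₁∘Ĵ, 0), f₂ = √c·(F₂∘Ĵ, 0),
f₃ = √c·(0, F₁∘Ĵ), f₄ = √c·(0, F₂∘Ĵ), where c = ϑα. -/
noncomputable def esVF (c : ℝ) (F1 F2 : ℝ → ℝ) (J : ℝ × ℝ → ℝ) : Fin 4 → ℝ × ℝ → ℝ × ℝ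
  | 0 => fun x => (Real.sqrt c * F1 (J x), 0)
  | 1 => fun x => (Real.sqrt c * F2 (J x), 0)
  | 2 => fun x => (0, Real.sqrt c * F1 (J x))
  | 3 => fun x => (0, Real.sqrt c * F2 (J x))


open Real

lemma sin_int_pi' (n : ℤ) (x : ℝ) (h : x = n * π) : Real.sin x = 0 := by
  rw [h]; exact Real.sin_int_mul_pi n

lemma cos_int_two_pi' (n : ℤ) (x : ℝ) (h : x = n * (2*π)) : Real.cos x = 1 := by
  rw [h]; exact Real.cos_int_mul_two_pi n


lemma trigId1 (s c p q l A B C : ℝ) (h1 : s^2+c^2 = 1) (h2 : p^2+q^2 = 1)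
    (hA : A*(1+l) = 1/2) (hB : B*(1-l) = 1/2) (hC : C*l = 1/4) :
    A/4 + B/4 - (A^2/2)*(1+l)*((c*q-s*p)^2-(s*q+c*p)^2) - (B^2/2)*(1-l)*((c*q+s*p)^2-(s*q-c*p)^2) + ((A+B)/2)*(C*(q^2-p^2)*(2*l) - (c^2-s^2)/2)
    = s*q*(A*(s*q+c*p)+B*(s*q-c*p)) := by
  linear_combination ((-1/4)*B + (-1/4)*A + (-1/2)*q^2*B^2 + (-1/2)*q^2*A^2 + (1/2)*q^2*l*B^2 + (-1/2)*q^2*l*A^2 + (1/2)*p^2*B^2 + (1/2)*p^2*A^2 + (-1/2)*p^2*l*B^2 + (1/2)*p^2*l*A^2)*h1 + ((-1/2)*B^2 + (-1/2)*A^2 + 1*l*B*C + (1/2)*l*B^2 + 1*l*A*C + (-1/2)*l*A^2 - 1*s^2*B + 1*s^2*B^2 - 1*s^2*A + 1*s^2*A^2 - 1*s^2*l*B^2 + 1*s^2*l*A^2)*h2 + ((-1/2)*A + 1*p^2*A + 2*s*c*p*q*A + 1*s^2*A - 2*s^2*p^2*A)*hA + ((-1/2)*B + 1*p^2*B - 2*s*c*p*q*B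 + 1*s^2*B - 2*s^2*p^2*B)*hB + (1*B + 1*A - 2*p^2*B - 2*p^2*A)*hC

lemma trigId2 (s c p q l A B C : ℝ) (h1 : s^2+c^2 = 1) (h2 : p^2+q^2 = 1)
    (hA : A*(1+l) = 1/2) (hB : B*(1-l) = 1/2) (hC : C*l = 1/4) :
    (A-B)*(B*(c*q+s*p)*(1-l) - A*(c*q-s*p)*(1+l)) + A/4 + B/4 + (A^2/2)*(1+l)*((c*q-s*p)^2-(s*q+c*p)^2) + (B^2/2)*(1-l)*((c*q+s*p)^2-(s*q-c*p)^2) - ((A+B)/2)*(C*(q^2-p^2)*(2*l) + (c^2-s^2)/2)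
    = s*p*(A*(1-(c*q-s*p)) - B*(1-(c*q+s*p))) := by
  linear_combination ((-1/4)*B + (-1/4)*A + (1/2)*q^2*B^2 + (1/2)*q^2*A^2 + (-1/2)*q^2*l*B^2 + (1/2)*q^2*l*A^2 + (-1/2)*p^2*B^2 + (-1/2)*p^2*A^2 + (1/2)*p^2*l*B^2 + (-1/2)*p^2*l*A^2)*h1 + ((1/2)*B^2 + (1/2)*A^2 - 1*l*B*C + (-1/2)*l*B^2 - 1*l*A*C + (1/2)*l*A^2 - 1*s^2*B^2 - 1*s^2*A^2 + 1*s^2*l*B^2 - 1*s^2*l*A^2)*h2 + ((1/2)*A - 1*p^2*A + 1*c*q*B - 1*c*q*A - 1*s*p*B + 1*s*p*A - 2*s*c*p*q*A - 1*s^2*A + 2*s^2*p^2*A)*hA + ((1/2)*B - 1*p^2*B - 1*c*q*B + 1*c*q*A - 1*s*p*B + 1*s*p*A + 2*s*c*p*q*B - 1*s^2*B + 2*s^2*p^2*B)*hB + (-1*B - 1*A + 2*p^2*B + 2*p^2*A)*hC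

lemma trigId3 (s c p q l A B C : ℝ) (h1 : s^2+c^2 = 1) (h2 : p^2+q^2 = 1)
    (hA : A*(1+l) = 1/2) (hB : B*(1-l) = 1/2) (hC : C*l = 1/4) :
    (1/2)*(A*(2*s*c/2 + C*(2*p*q)*(2*l)) - A^2*2*(s*q+c*p)*(c*q-s*p)*(1+l) + B^2*2*(s*q-c*p)*(c*q+s*p)*(1-l) - B*(2*s*c/2 - C*(2*p*q)*(2*l)))
    = s*p*(A*(s*q+c*p)+B*(s*q-c*p)) := by
  linear_combination (-1*p*q*B^2 - 1*p*q*A^2 + 1*p*q*l*B^2 - 1*p*q*l*A^2)*h1 + (1*s*c*B^2 - 1*s*c*A^2 - 1*s*c*l*B^2 - 1*s*c*l*A^2)*h2 + (-1*p*q*A - 1*s*c*A + 2*s*c*p^2*A + 2*s^2*p*q*A)*hA + (-1*p*q*B + 1*s*c*B - 2*s*c*p^2*B + 2*s^2*p*q*B)*hB + (2*p*q*B + 2*p*q*A)*hC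

lemma trigId4 (s c p q l A B C : ℝ) (h1 : s^2+c^2 = 1) (h2 : p^2+q^2 = 1)
    (hA : A*(1+l) = 1/2) (hB : B*(1-l) = 1/2) (hC : C*l = 1/4) :
    (1/2)*((A+B)*(-2*B*(s*q-c*p)*(1-l) + 2*A*(s*q+c*p)*(1+l)) - 2*A^2*(s*q+c*p)*(c*q-s*p)*(1+l) + 2*B^2*(s*q-c*p)*(c*q+s*p)*(1-l) + (B-A)*(-(2*s*c)/2) + (A+B)*C*(-(2*p*q)*(2*l)))
    = c*p*(A*(1-(c*q-s*p)) + B*(1-(c*q+s*p))) := by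
  linear_combination (1*p*q*B - 1*p*q*B^2 + 1*p*q*A - 1*p*q*A^2 + 1*p*q*l*B^2 - 1*p*q*l*A^2)*h1 + (1*s*c*B^2 - 1*s*c*A^2 - 1*s*c*l*B^2 - 1*s*c*l*A^2)*h2 + (-1*p*q*A + 1*c*p*B + 1*c*p*A + 1*s*q*B + 1*s*q*A - 1*s*c*A + 2*s*c*p^2*A + 2*s^2*p*q*A)*hA + (-1*p*q*B + 1*c*p*B + 1*c*p*A - 1*s*q*B - 1*s*q*A + 1*s*c*B - 2*s*c*p^2*B + 2*s^2*p*q*B)*hB + (-2*p*q*B - 2*p*q*A)*hC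

lemma kfacts (k : ℕ) (hk : 1 < k) :
    (k:ℝ) ≠ 0 ∧ 1 + 1/(k:ℝ) ≠ 0 ∧ 1 - 1/(k:ℝ) ≠ 0 := by
  have h2 : (2:ℝ) ≤ (k:ℝ) := by exact_mod_cast hk
  have hk0 : (0:ℝ) < k := by linarith
  refine ⟨ne_of_gt hk0, ?_, ?_⟩
  · positivity
  · have : 1/(k:ℝ) ≤ 1/2 := by
      rw [div_le_div_iff₀ hk0 (by norm_num)]; linarith
    intro h; rw [sub_eq_zero] at h; rw [← h] at this; linarith

lemma inner0 (k : ℕ) (hk : 1 < k) (θ : ℝ) :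
    (∫ τ in (0:ℝ)..θ, dither k 0 τ)
      = Real.sin (θ + θ/(k:ℝ)) * (1/(2*(1+1/(k:ℝ))))
        + Real.sin (θ - θ/(k:ℝ)) * (1/(2*(1-1/(k:ℝ)))) := by
  obtain ⟨hK, ha, hb⟩ := kfacts k hk
  have key : ∀ τ ∈ Set.uIcc (0:ℝ) θ,
      HasDerivAt (fun τ => Real.sin (τ + τ/(k:ℝ)) * (1/(2*(1+1/(k:ℝ))))
        + Real.sin (τ - τ/(k:ℝ)) * (1/(2*(1-1/(k:ℝ))))) (dither k 0 τ) τ := by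
    intro τ _
    have hu : HasDerivAt (fun τ : ℝ => τ + τ/(k:ℝ)) (1 + 1/(k:ℝ)) τ := by
      simpa using (hasDerivAt_id τ).fun_add ((hasDerivAt_id τ).div_const (k:ℝ))
    have hv : HasDerivAt (fun τ : ℝ => τ - τ/(k:ℝ)) (1 - 1/(k:ℝ)) τ := by
      simpa using (hasDerivAt_id τ).fun_sub ((hasDerivAt_id τ).div_const (k:ℝ))
    have H := ((hu.sin.mul_const (1/(2*(1+1/(k:ℝ))))).fun_add
      (hv.sin.mul_const (1/(2*(1-1/(k:ℝ))))))
    have e1 : (1+1/(k:ℝ))*(1/(2*(1+1/(k:ℝ)))) = 1/2 := by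
      rw [mul_one_div, div_eq_iff (mul_ne_zero two_ne_zero ha)]; ring
    have e2 : (1-1/(k:ℝ))*(1/(2*(1-1/(k:ℝ)))) = 1/2 := by
      rw [mul_one_div, div_eq_iff (mul_ne_zero two_ne_zero hb)]; ring
    refine H.congr_deriv (Eq.symm ?_)
    show Real.cos τ * Real.cos (τ/(k:ℝ)) = _
    rw [Real.cos_add, Real.cos_sub]
    linear_combination (- Real.cos τ * Real.cos (τ/(k:ℝ)) + Real.sin τ * Real.sin (τ/(k:ℝ)))*e1
      - (Real.cos τ * Real.cos (τ/(k:ℝ)) + Real.sin τ * Real.sin (τ/(k:ℝ)))*e2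
  rw [intervalIntegral.integral_eq_sub_of_hasDerivAt key (by
    apply Continuous.intervalIntegrable
    show Continuous (fun τ : ℝ => Real.cos τ * Real.cos (τ / (k:ℝ)))
    fun_prop)]
  simp

lemma inner1 (k : ℕ) (hk : 1 < k) (θ : ℝ) :
    (∫ τ in (0:ℝ)..θ, dither k 1 τ)
      = (1 - Real.cos (θ + θ/(k:ℝ))) * (1/(2*(1+1/(k:ℝ))))
        + (1 - Real.cos (θ - θ/(k:ℝ))) * (1/(2*(1-1/(k:ℝ)))) := by
  obtain ⟨hK, ha, hb⟩ := kfacts k hk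
  have key : ∀ τ ∈ Set.uIcc (0:ℝ) θ,
      HasDerivAt (fun τ => (1 - Real.cos (τ + τ/(k:ℝ))) * (1/(2*(1+1/(k:ℝ))))
        + (1 - Real.cos (τ - τ/(k:ℝ))) * (1/(2*(1-1/(k:ℝ))))) (dither k 1 τ) τ := by
    intro τ _
    have hu : HasDerivAt (fun τ : ℝ => τ + τ/(k:ℝ)) (1 + 1/(k:ℝ)) τ := by
      simpa using (hasDerivAt_id τ).fun_add ((hasDerivAt_id τ).div_const (k:ℝ))
    have hv : HasDerivAt (fun τ : ℝ => τ - τ/(k:ℝ)) (1 - 1/(k:ℝ)) τ := by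
      simpa using (hasDerivAt_id τ).fun_sub ((hasDerivAt_id τ).div_const (k:ℝ))
    have H := ((((hasDerivAt_const τ (1:ℝ)).fun_sub hu.cos).mul_const (1/(2*(1+1/(k:ℝ))))).fun_add
      (((hasDerivAt_const τ (1:ℝ)).fun_sub hv.cos).mul_const (1/(2*(1-1/(k:ℝ))))))
    have e1 : (1+1/(k:ℝ))*(1/(2*(1+1/(k:ℝ)))) = 1/2 := by
      rw [mul_one_div, div_eq_iff (mul_ne_zero two_ne_zero ha)]; ring
    have e2 : (1-1/(k:ℝ))*(1/(2*(1-1/(k:ℝ)))) = 1/2 := by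
      rw [mul_one_div, div_eq_iff (mul_ne_zero two_ne_zero hb)]; ring
    refine H.congr_deriv (Eq.symm ?_)
    show Real.sin τ * Real.cos (τ/(k:ℝ)) = _
    rw [Real.sin_add, Real.sin_sub]
    linear_combination (- Real.sin τ * Real.cos (τ/(k:ℝ)) - Real.cos τ * Real.sin (τ/(k:ℝ)))*e1
      - (Real.sin τ * Real.cos (τ/(k:ℝ)) - Real.cos τ * Real.sin (τ/(k:ℝ)))*e2
  rw [intervalIntegral.integral_eq_sub_of_hasDerivAt key (by
    apply Continuous.intervalIntegrable
    show Continuous (fun τ : ℝ => Real.sin τ * Real.cos (τ / (k:ℝ)))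
    fun_prop)]
  simp

lemma inner2 (k : ℕ) (hk : 1 < k) (θ : ℝ) :
    (∫ τ in (0:ℝ)..θ, dither k 2 τ)
      = (1 - Real.cos (θ + θ/(k:ℝ))) * (1/(2*(1+1/(k:ℝ))))
        - (1 - Real.cos (θ - θ/(k:ℝ))) * (1/(2*(1-1/(k:ℝ)))) := by
  obtain ⟨hK, ha, hb⟩ := kfacts k hk
  have key : ∀ τ ∈ Set.uIcc (0:ℝ) θ,
      HasDerivAt (fun τ => (1 - Real.cos (τ + τ/(k:ℝ))) * (1/(2*(1+1/(k:ℝ))))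
        - (1 - Real.cos (τ - τ/(k:ℝ))) * (1/(2*(1-1/(k:ℝ))))) (dither k 2 τ) τ := by
    intro τ _
    have hu : HasDerivAt (fun τ : ℝ => τ + τ/(k:ℝ)) (1 + 1/(k:ℝ)) τ := by
      simpa using (hasDerivAt_id τ).fun_add ((hasDerivAt_id τ).div_const (k:ℝ))
    have hv : HasDerivAt (fun τ : ℝ => τ - τ/(k:ℝ)) (1 - 1/(k:ℝ)) τ := by
      simpa using (hasDerivAt_id τ).fun_sub ((hasDerivAt_id τ).div_const (k:ℝ))
    have H := ((((hasDerivAt_const τ (1:ℝ)).fun_sub hu.cos).mul_const (1/(2*(1+1/(k:ℝ))))).fun_sub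
      (((hasDerivAt_const τ (1:ℝ)).fun_sub hv.cos).mul_const (1/(2*(1-1/(k:ℝ))))))
    have e1 : (1+1/(k:ℝ))*(1/(2*(1+1/(k:ℝ)))) = 1/2 := by
      rw [mul_one_div, div_eq_iff (mul_ne_zero two_ne_zero ha)]; ring
    have e2 : (1-1/(k:ℝ))*(1/(2*(1-1/(k:ℝ)))) = 1/2 := by
      rw [mul_one_div, div_eq_iff (mul_ne_zero two_ne_zero hb)]; ring
    refine H.congr_deriv (Eq.symm ?_)
    show Real.cos τ * Real.sin (τ/(k:ℝ)) = _
    rw [Real.sin_add, Real.sin_sub]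
    linear_combination (- Real.sin τ * Real.cos (τ/(k:ℝ)) - Real.cos τ * Real.sin (τ/(k:ℝ)))*e1
      + (Real.sin τ * Real.cos (τ/(k:ℝ)) - Real.cos τ * Real.sin (τ/(k:ℝ)))*e2
  rw [intervalIntegral.integral_eq_sub_of_hasDerivAt key (by
    apply Continuous.intervalIntegrable
    show Continuous (fun τ : ℝ => Real.cos τ * Real.sin (τ / (k:ℝ)))
    fun_prop)]
  simp

lemma nu01 (k : ℕ) (hk : 1 < k) :
    avgCoeff k 0 1 = (k:ℝ)^2/(4*((k:ℝ)^2-1)) := by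
  obtain ⟨hK, ha, hb⟩ := kfacts k hk
  have h2 : (2:ℝ) ≤ (k:ℝ) := by exact_mod_cast hk
  have e1 : (1/(2*(1+1/(k:ℝ))))*(1+1/(k:ℝ)) = 1/2 := by
    rw [one_div, inv_mul_eq_div, div_eq_iff (mul_ne_zero two_ne_zero ha)]; ring
  have e2 : (1/(2*(1-1/(k:ℝ))))*(1-1/(k:ℝ)) = 1/2 := by
    rw [one_div, inv_mul_eq_div, div_eq_iff (mul_ne_zero two_ne_zero hb)]; ring
  have e3 : ((k:ℝ)/4)*(1/(k:ℝ)) = 1/4 := by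
    field_simp
  unfold avgCoeff
  simp only [inner0 k hk]
  rw [intervalIntegral.integral_eq_sub_of_hasDerivAt (f := fun θ : ℝ =>
      1/(2*(1+1/(k:ℝ)))/4 * θ + 1/(2*(1-1/(k:ℝ)))/4 * θ
      - Real.sin (θ+θ/(k:ℝ)) * Real.cos (θ+θ/(k:ℝ)) * ((1/(2*(1+1/(k:ℝ))))^2/2)
      - Real.sin (θ-θ/(k:ℝ)) * Real.cos (θ-θ/(k:ℝ)) * ((1/(2*(1-1/(k:ℝ))))^2/2)
      + (1/(2*(1+1/(k:ℝ))) + 1/(2*(1-1/(k:ℝ))))/2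
          * ((k:ℝ)/4 * Real.sin (θ/(k:ℝ)+θ/(k:ℝ)) - Real.sin (θ+θ)/4))
    (fun θ _ => by
      have hu : HasDerivAt (fun τ : ℝ => τ + τ/(k:ℝ)) (1 + 1/(k:ℝ)) θ := by
        simpa using (hasDerivAt_id θ).fun_add ((hasDerivAt_id θ).div_const (k:ℝ))
      have hv : HasDerivAt (fun τ : ℝ => τ - τ/(k:ℝ)) (1 - 1/(k:ℝ)) θ := by
        simpa using (hasDerivAt_id θ).fun_sub ((hasDerivAt_id θ).div_const (k:ℝ))
      have hw : HasDerivAt (fun τ : ℝ => τ/(k:ℝ) + τ/(k:ℝ)) (1/(k:ℝ) + 1/(k:ℝ)) θ := by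
        simpa using ((hasDerivAt_id θ).div_const (k:ℝ)).fun_add ((hasDerivAt_id θ).div_const (k:ℝ))
      have hz : HasDerivAt (fun τ : ℝ => τ + τ) (1 + 1) θ :=
        (hasDerivAt_id θ).fun_add (hasDerivAt_id θ)
      have H := (((((hasDerivAt_id θ).const_mul (1/(2*(1+1/(k:ℝ)))/4)).fun_add
        ((hasDerivAt_id θ).const_mul (1/(2*(1-1/(k:ℝ)))/4))).fun_sub
        ((hu.sin.fun_mul hu.cos).mul_const ((1/(2*(1+1/(k:ℝ))))^2/2))).fun_sub
        ((hv.sin.fun_mul hv.cos).mul_const ((1/(2*(1-1/(k:ℝ))))^2/2))).fun_add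
        (((hw.sin.const_mul ((k:ℝ)/4)).fun_sub (hz.sin.div_const 4)).const_mul
          ((1/(2*(1+1/(k:ℝ))) + 1/(2*(1-1/(k:ℝ))))/2))
      refine H.congr_deriv (Eq.symm ?_)
      have key := trigId1 (Real.sin θ) (Real.cos θ) (Real.sin (θ/(k:ℝ))) (Real.cos (θ/(k:ℝ)))
        (1/(k:ℝ)) (1/(2*(1+1/(k:ℝ)))) (1/(2*(1-1/(k:ℝ)))) ((k:ℝ)/4)
        (Real.sin_sq_add_cos_sq θ) (Real.sin_sq_add_cos_sq (θ/(k:ℝ))) e1 e2 e3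
      simp only [dither, Real.sin_add, Real.cos_add, Real.sin_sub, Real.cos_sub]
      linear_combination -key)
    (by
      apply Continuous.intervalIntegrable
      have : Continuous (fun θ : ℝ => Real.sin θ * Real.cos (θ / (k:ℝ))) := by fun_prop
      exact (this.mul (by fun_prop)))]
  have hdiv : 2*π*(k:ℝ)/(k:ℝ) = 2*π := by rw [mul_div_assoc, div_self hK, mul_one]
  have hs1 : Real.sin (2*π*(k:ℝ) + 2*π*(k:ℝ)/(k:ℝ)) = 0 := by
    refine sin_int_pi' (2*(k:ℤ)+2) _ ?_
    rw [hdiv]; push_cast; ring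
  have hs2 : Real.sin (2*π*(k:ℝ) - 2*π*(k:ℝ)/(k:ℝ)) = 0 := by
    refine sin_int_pi' (2*(k:ℤ)-2) _ ?_
    rw [hdiv]; push_cast; ring
  have hs3 : Real.sin (2*π*(k:ℝ)/(k:ℝ) + 2*π*(k:ℝ)/(k:ℝ)) = 0 := by
    refine sin_int_pi' 4 _ ?_
    rw [hdiv]; push_cast; ring
  have hs4 : Real.sin (2*π*(k:ℝ) + 2*π*(k:ℝ)) = 0 := by
    refine sin_int_pi' (4*(k:ℤ)) _ ?_
    push_cast; ring
  simp only [hs1, hs2, hs3, hs4, Real.sin_zero, mul_zero, zero_mul, zero_div, add_zero,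
    sub_zero, zero_add, zero_sub, neg_zero, Real.cos_zero, mul_one, sub_self]
  have hπ : π ≠ 0 := Real.pi_ne_zero
  have hK1 : (k:ℝ)^2 - 1 ≠ 0 := by nlinarith
  have hbm : (k:ℝ) - 1 ≠ 0 := by intro h; rw [sub_eq_zero] at h; rw [h] at h2; linarith
  have hbp : (k:ℝ) + 1 ≠ 0 := by positivity
  have h8 : (-8:ℝ) + (k:ℝ)*8 ≠ 0 := by intro h; nlinarith
  field_simp
  ring

lemma nu23 (k : ℕ) (hk : 1 < k) :
    avgCoeff k 2 3 = (k:ℝ)^2/(4*((k:ℝ)^2-1)) := by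
  obtain ⟨hK, ha, hb⟩ := kfacts k hk
  have h2 : (2:ℝ) ≤ (k:ℝ) := by exact_mod_cast hk
  have e1 : (1/(2*(1+1/(k:ℝ))))*(1+1/(k:ℝ)) = 1/2 := by
    rw [one_div, inv_mul_eq_div, div_eq_iff (mul_ne_zero two_ne_zero ha)]; ring
  have e2 : (1/(2*(1-1/(k:ℝ))))*(1-1/(k:ℝ)) = 1/2 := by
    rw [one_div, inv_mul_eq_div, div_eq_iff (mul_ne_zero two_ne_zero hb)]; ring
  have e3 : ((k:ℝ)/4)*(1/(k:ℝ)) = 1/4 := by field_simp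
  unfold avgCoeff
  simp only [inner2 k hk]
  rw [intervalIntegral.integral_eq_sub_of_hasDerivAt (f := fun θ : ℝ =>
      (1/(2*(1+1/(k:ℝ))) - 1/(2*(1-1/(k:ℝ)))) * (1/(2*(1-1/(k:ℝ))) * Real.sin (θ-θ/(k:ℝ))
          - 1/(2*(1+1/(k:ℝ))) * Real.sin (θ+θ/(k:ℝ)))
      + 1/(2*(1+1/(k:ℝ)))/4 * θ + 1/(2*(1-1/(k:ℝ)))/4 * θ
      + Real.sin (θ+θ/(k:ℝ)) * Real.cos (θ+θ/(k:ℝ)) * ((1/(2*(1+1/(k:ℝ))))^2/2)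
      + Real.sin (θ-θ/(k:ℝ)) * Real.cos (θ-θ/(k:ℝ)) * ((1/(2*(1-1/(k:ℝ))))^2/2)
      - (1/(2*(1+1/(k:ℝ))) + 1/(2*(1-1/(k:ℝ))))/2
          * ((k:ℝ)/4 * Real.sin (θ/(k:ℝ)+θ/(k:ℝ)) + Real.sin (θ+θ)/4))
    (fun θ _ => by
      have hu : HasDerivAt (fun τ : ℝ => τ + τ/(k:ℝ)) (1 + 1/(k:ℝ)) θ := by
        simpa using (hasDerivAt_id θ).fun_add ((hasDerivAt_id θ).div_const (k:ℝ))
      have hv : HasDerivAt (fun τ : ℝ => τ - τ/(k:ℝ)) (1 - 1/(k:ℝ)) θ := by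
        simpa using (hasDerivAt_id θ).fun_sub ((hasDerivAt_id θ).div_const (k:ℝ))
      have hw : HasDerivAt (fun τ : ℝ => τ/(k:ℝ) + τ/(k:ℝ)) (1/(k:ℝ) + 1/(k:ℝ)) θ := by
        simpa using ((hasDerivAt_id θ).div_const (k:ℝ)).fun_add ((hasDerivAt_id θ).div_const (k:ℝ))
      have hz : HasDerivAt (fun τ : ℝ => τ + τ) (1 + 1) θ :=
        (hasDerivAt_id θ).fun_add (hasDerivAt_id θ)
      have H := (((((((hv.sin.const_mul (1/(2*(1-1/(k:ℝ))))).fun_sub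
        (hu.sin.const_mul (1/(2*(1+1/(k:ℝ)))))).const_mul
          (1/(2*(1+1/(k:ℝ))) - 1/(2*(1-1/(k:ℝ))))).fun_add
        ((hasDerivAt_id θ).const_mul (1/(2*(1+1/(k:ℝ)))/4))).fun_add
        ((hasDerivAt_id θ).const_mul (1/(2*(1-1/(k:ℝ)))/4))).fun_add
        ((hu.sin.fun_mul hu.cos).mul_const ((1/(2*(1+1/(k:ℝ))))^2/2))).fun_add
        ((hv.sin.fun_mul hv.cos).mul_const ((1/(2*(1-1/(k:ℝ))))^2/2))).fun_sub
        (((hw.sin.const_mul ((k:ℝ)/4)).fun_add (hz.sin.div_const 4)).const_mul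
          ((1/(2*(1+1/(k:ℝ))) + 1/(2*(1-1/(k:ℝ))))/2))
      refine H.congr_deriv (Eq.symm ?_)
      have key := trigId2 (Real.sin θ) (Real.cos θ) (Real.sin (θ/(k:ℝ))) (Real.cos (θ/(k:ℝ)))
        (1/(k:ℝ)) (1/(2*(1+1/(k:ℝ)))) (1/(2*(1-1/(k:ℝ)))) ((k:ℝ)/4)
        (Real.sin_sq_add_cos_sq θ) (Real.sin_sq_add_cos_sq (θ/(k:ℝ))) e1 e2 e3
      simp only [dither, Real.sin_add, Real.cos_add, Real.sin_sub, Real.cos_sub]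
      linear_combination -key)
    (by
      apply Continuous.intervalIntegrable
      have : Continuous (fun θ : ℝ => Real.sin θ * Real.sin (θ / (k:ℝ))) := by fun_prop
      exact (this.mul (by fun_prop)))]
  have hdiv : 2*π*(k:ℝ)/(k:ℝ) = 2*π := by rw [mul_div_assoc, div_self hK, mul_one]
  have hs1 : Real.sin (2*π*(k:ℝ) + 2*π*(k:ℝ)/(k:ℝ)) = 0 := by
    refine sin_int_pi' (2*(k:ℤ)+2) _ ?_
    rw [hdiv]; push_cast; ring
  have hs2 : Real.sin (2*π*(k:ℝ) - 2*π*(k:ℝ)/(k:ℝ)) = 0 := by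
    refine sin_int_pi' (2*(k:ℤ)-2) _ ?_
    rw [hdiv]; push_cast; ring
  have hs3 : Real.sin (2*π*(k:ℝ)/(k:ℝ) + 2*π*(k:ℝ)/(k:ℝ)) = 0 := by
    refine sin_int_pi' 4 _ ?_
    rw [hdiv]; push_cast; ring
  have hs4 : Real.sin (2*π*(k:ℝ) + 2*π*(k:ℝ)) = 0 := by
    refine sin_int_pi' (4*(k:ℤ)) _ ?_
    push_cast; ring
  simp only [hs1, hs2, hs3, hs4, Real.sin_zero, mul_zero, zero_mul, zero_div, add_zero,
    sub_zero, zero_add, zero_sub, neg_zero, Real.cos_zero, mul_one, sub_self]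
  have hπ : π ≠ 0 := Real.pi_ne_zero
  have hK1 : (k:ℝ)^2 - 1 ≠ 0 := by nlinarith
  have hbm : (k:ℝ) - 1 ≠ 0 := by intro h; rw [sub_eq_zero] at h; rw [h] at h2; linarith
  have hbp : (k:ℝ) + 1 ≠ 0 := by positivity
  have h8 : (-8:ℝ) + (k:ℝ)*8 ≠ 0 := by intro h; nlinarith
  field_simp
  ring

lemma nu03 (k : ℕ) (hk : 1 < k) : avgCoeff k 0 3 = 0 := by
  obtain ⟨hK, ha, hb⟩ := kfacts k hk
  have h2 : (2:ℝ) ≤ (k:ℝ) := by exact_mod_cast hk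
  have e1 : (1/(2*(1+1/(k:ℝ))))*(1+1/(k:ℝ)) = 1/2 := by
    rw [one_div, inv_mul_eq_div, div_eq_iff (mul_ne_zero two_ne_zero ha)]; ring
  have e2 : (1/(2*(1-1/(k:ℝ))))*(1-1/(k:ℝ)) = 1/2 := by
    rw [one_div, inv_mul_eq_div, div_eq_iff (mul_ne_zero two_ne_zero hb)]; ring
  have e3 : ((k:ℝ)/4)*(1/(k:ℝ)) = 1/4 := by field_simp
  unfold avgCoeff
  simp only [inner0 k hk]
  rw [intervalIntegral.integral_eq_sub_of_hasDerivAt (f := fun θ : ℝ =>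
      (1/(2*(1+1/(k:ℝ))) * ((-Real.cos (θ+θ))/4 - (k:ℝ)/4 * Real.cos (θ/(k:ℝ)+θ/(k:ℝ)))
        - (1/(2*(1+1/(k:ℝ))))^2 * (Real.sin (θ+θ/(k:ℝ)))^2
        + (1/(2*(1-1/(k:ℝ))))^2 * (Real.sin (θ-θ/(k:ℝ)))^2
        - 1/(2*(1-1/(k:ℝ))) * ((-Real.cos (θ+θ))/4 + (k:ℝ)/4 * Real.cos (θ/(k:ℝ)+θ/(k:ℝ))))/2)
    (fun θ _ => by
      have hu : HasDerivAt (fun τ : ℝ => τ + τ/(k:ℝ)) (1 + 1/(k:ℝ)) θ := by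
        simpa using (hasDerivAt_id θ).fun_add ((hasDerivAt_id θ).div_const (k:ℝ))
      have hv : HasDerivAt (fun τ : ℝ => τ - τ/(k:ℝ)) (1 - 1/(k:ℝ)) θ := by
        simpa using (hasDerivAt_id θ).fun_sub ((hasDerivAt_id θ).div_const (k:ℝ))
      have hw : HasDerivAt (fun τ : ℝ => τ/(k:ℝ) + τ/(k:ℝ)) (1/(k:ℝ) + 1/(k:ℝ)) θ := by
        simpa using ((hasDerivAt_id θ).div_const (k:ℝ)).fun_add ((hasDerivAt_id θ).div_const (k:ℝ))
      have hz : HasDerivAt (fun τ : ℝ => τ + τ) (1 + 1) θ :=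
        (hasDerivAt_id θ).fun_add (hasDerivAt_id θ)
      have H := (((((((hz.cos.fun_neg.div_const 4).fun_sub (hw.cos.const_mul ((k:ℝ)/4))).const_mul
        (1/(2*(1+1/(k:ℝ))))).fun_sub
        ((hu.sin.fun_pow 2).const_mul ((1/(2*(1+1/(k:ℝ))))^2))).fun_add
        ((hv.sin.fun_pow 2).const_mul ((1/(2*(1-1/(k:ℝ))))^2))).fun_sub
        (((hz.cos.fun_neg.div_const 4).fun_add (hw.cos.const_mul ((k:ℝ)/4))).const_mul
          (1/(2*(1-1/(k:ℝ)))))).div_const 2)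
      refine H.congr_deriv (Eq.symm ?_)
      have key := trigId3 (Real.sin θ) (Real.cos θ) (Real.sin (θ/(k:ℝ))) (Real.cos (θ/(k:ℝ)))
        (1/(k:ℝ)) (1/(2*(1+1/(k:ℝ)))) (1/(2*(1-1/(k:ℝ)))) ((k:ℝ)/4)
        (Real.sin_sq_add_cos_sq θ) (Real.sin_sq_add_cos_sq (θ/(k:ℝ))) e1 e2 e3
      simp only [dither, Real.sin_add, Real.cos_add, Real.sin_sub, Real.cos_sub]
      linear_combination -key)
    (by
      apply Continuous.intervalIntegrable
      have : Continuous (fun θ : ℝ => Real.sin θ * Real.sin (θ / (k:ℝ))) := by fun_prop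
      exact (this.mul (by fun_prop)))]
  have hdiv : 2*π*(k:ℝ)/(k:ℝ) = 2*π := by rw [mul_div_assoc, div_self hK, mul_one]
  have hs1 : Real.sin (2*π*(k:ℝ) + 2*π*(k:ℝ)/(k:ℝ)) = 0 := by
    refine sin_int_pi' (2*(k:ℤ)+2) _ ?_; rw [hdiv]; push_cast; ring
  have hs2 : Real.sin (2*π*(k:ℝ) - 2*π*(k:ℝ)/(k:ℝ)) = 0 := by
    refine sin_int_pi' (2*(k:ℤ)-2) _ ?_; rw [hdiv]; push_cast; ring
  have hc3 : Real.cos (2*π*(k:ℝ)/(k:ℝ) + 2*π*(k:ℝ)/(k:ℝ)) = 1 := by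
    refine cos_int_two_pi' 2 _ ?_; rw [hdiv]; push_cast; ring
  have hc4 : Real.cos (2*π*(k:ℝ) + 2*π*(k:ℝ)) = 1 := by
    refine cos_int_two_pi' (2*(k:ℤ)) _ ?_; push_cast; ring
  simp only [hs1, hs2, hc3, hc4, Real.sin_zero, Real.cos_zero, mul_zero, zero_mul, zero_div,
    add_zero, sub_zero, zero_add, zero_sub, neg_zero, mul_one, sub_self]

lemma nu12 (k : ℕ) (hk : 1 < k) : avgCoeff k 1 2 = 0 := by
  obtain ⟨hK, ha, hb⟩ := kfacts k hk
  have h2 : (2:ℝ) ≤ (k:ℝ) := by exact_mod_cast hk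
  have e1 : (1/(2*(1+1/(k:ℝ))))*(1+1/(k:ℝ)) = 1/2 := by
    rw [one_div, inv_mul_eq_div, div_eq_iff (mul_ne_zero two_ne_zero ha)]; ring
  have e2 : (1/(2*(1-1/(k:ℝ))))*(1-1/(k:ℝ)) = 1/2 := by
    rw [one_div, inv_mul_eq_div, div_eq_iff (mul_ne_zero two_ne_zero hb)]; ring
  have e3 : ((k:ℝ)/4)*(1/(k:ℝ)) = 1/4 := by field_simp
  unfold avgCoeff
  simp only [inner1 k hk]
  rw [intervalIntegral.integral_eq_sub_of_hasDerivAt (f := fun θ : ℝ =>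
      ((1/(2*(1+1/(k:ℝ))) + 1/(2*(1-1/(k:ℝ))))
          * (2 * (1/(2*(1-1/(k:ℝ)))) * Real.cos (θ-θ/(k:ℝ))
             - 2 * (1/(2*(1+1/(k:ℝ)))) * Real.cos (θ+θ/(k:ℝ)))
        - (1/(2*(1+1/(k:ℝ))))^2 * (Real.sin (θ+θ/(k:ℝ)))^2
        + (1/(2*(1-1/(k:ℝ))))^2 * (Real.sin (θ-θ/(k:ℝ)))^2
        + (1/(2*(1-1/(k:ℝ))) - 1/(2*(1+1/(k:ℝ)))) * (Real.cos (θ+θ)/4)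
        + (1/(2*(1+1/(k:ℝ))) + 1/(2*(1-1/(k:ℝ))))
            * ((k:ℝ)/4 * Real.cos (θ/(k:ℝ)+θ/(k:ℝ))))/2)
    (fun θ _ => by
      have hu : HasDerivAt (fun τ : ℝ => τ + τ/(k:ℝ)) (1 + 1/(k:ℝ)) θ := by
        simpa using (hasDerivAt_id θ).fun_add ((hasDerivAt_id θ).div_const (k:ℝ))
      have hv : HasDerivAt (fun τ : ℝ => τ - τ/(k:ℝ)) (1 - 1/(k:ℝ)) θ := by
        simpa using (hasDerivAt_id θ).fun_sub ((hasDerivAt_id θ).div_const (k:ℝ))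
      have hw : HasDerivAt (fun τ : ℝ => τ/(k:ℝ) + τ/(k:ℝ)) (1/(k:ℝ) + 1/(k:ℝ)) θ := by
        simpa using ((hasDerivAt_id θ).div_const (k:ℝ)).fun_add ((hasDerivAt_id θ).div_const (k:ℝ))
      have hz : HasDerivAt (fun τ : ℝ => τ + τ) (1 + 1) θ :=
        (hasDerivAt_id θ).fun_add (hasDerivAt_id θ)
      have H := ((((((((hv.cos.const_mul (2 * (1/(2*(1-1/(k:ℝ)))))).fun_sub
        (hu.cos.const_mul (2 * (1/(2*(1+1/(k:ℝ))))))).const_mul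
          (1/(2*(1+1/(k:ℝ))) + 1/(2*(1-1/(k:ℝ))))).fun_sub
        ((hu.sin.fun_pow 2).const_mul ((1/(2*(1+1/(k:ℝ))))^2))).fun_add
        ((hv.sin.fun_pow 2).const_mul ((1/(2*(1-1/(k:ℝ))))^2))).fun_add
        ((hz.cos.div_const 4).const_mul (1/(2*(1-1/(k:ℝ))) - 1/(2*(1+1/(k:ℝ)))))).fun_add
        ((hw.cos.const_mul ((k:ℝ)/4)).const_mul
          (1/(2*(1+1/(k:ℝ))) + 1/(2*(1-1/(k:ℝ)))))).div_const 2)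
      refine H.congr_deriv (Eq.symm ?_)
      have key := trigId4 (Real.sin θ) (Real.cos θ) (Real.sin (θ/(k:ℝ))) (Real.cos (θ/(k:ℝ)))
        (1/(k:ℝ)) (1/(2*(1+1/(k:ℝ)))) (1/(2*(1-1/(k:ℝ)))) ((k:ℝ)/4)
        (Real.sin_sq_add_cos_sq θ) (Real.sin_sq_add_cos_sq (θ/(k:ℝ))) e1 e2 e3
      simp only [dither, Real.sin_add, Real.cos_add, Real.sin_sub, Real.cos_sub]
      linear_combination -key)
    (by
      apply Continuous.intervalIntegrable
      have : Continuous (fun θ : ℝ => Real.cos θ * Real.sin (θ / (k:ℝ))) := by fun_prop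
      exact (this.mul (by fun_prop)))]
  have hdiv : 2*π*(k:ℝ)/(k:ℝ) = 2*π := by rw [mul_div_assoc, div_self hK, mul_one]
  have hs1 : Real.sin (2*π*(k:ℝ) + 2*π*(k:ℝ)/(k:ℝ)) = 0 := by
    refine sin_int_pi' (2*(k:ℤ)+2) _ ?_; rw [hdiv]; push_cast; ring
  have hs2 : Real.sin (2*π*(k:ℝ) - 2*π*(k:ℝ)/(k:ℝ)) = 0 := by
    refine sin_int_pi' (2*(k:ℤ)-2) _ ?_; rw [hdiv]; push_cast; ring
  have hc1 : Real.cos (2*π*(k:ℝ) + 2*π*(k:ℝ)/(k:ℝ)) = 1 := by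
    refine cos_int_two_pi' ((k:ℤ)+1) _ ?_; rw [hdiv]; push_cast; ring
  have hc2 : Real.cos (2*π*(k:ℝ) - 2*π*(k:ℝ)/(k:ℝ)) = 1 := by
    refine cos_int_two_pi' ((k:ℤ)-1) _ ?_; rw [hdiv]; push_cast; ring
  have hc3 : Real.cos (2*π*(k:ℝ)/(k:ℝ) + 2*π*(k:ℝ)/(k:ℝ)) = 1 := by
    refine cos_int_two_pi' 2 _ ?_; rw [hdiv]; push_cast; ring
  have hc4 : Real.cos (2*π*(k:ℝ) + 2*π*(k:ℝ)) = 1 := by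
    refine cos_int_two_pi' (2*(k:ℤ)) _ ?_; push_cast; ring
  simp only [hs1, hs2, hc1, hc2, hc3, hc4, Real.sin_zero, Real.cos_zero, mul_zero, zero_mul,
    zero_div, add_zero, sub_zero, zero_add, zero_sub, neg_zero, mul_one, sub_self]

lemma apply_pair (L : ℝ×ℝ →L[ℝ] ℝ) (a b : ℝ) :
    L (a, b) = a * L (1, 0) + b * L (0, 1) := by
  have h : (a, b) = a • ((1:ℝ), (0:ℝ)) + b • ((0:ℝ), (1:ℝ)) := by
    simp [Prod.ext_iff]
  rw [h, map_add, map_smul, map_smul, smul_eq_mul, smul_eq_mul]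


/-- The right-hand side G of the Lie bracket system satisfies
⟨G(x), ∇Ĵ(x)⟩ = −ϑ‖∇Ĵ(x)‖² for every x, i.e. G deviates from −ϑ∇Ĵ only by
a term pointwise orthogonal to ∇Ĵ. -/
theorem stmt1 (k : ℕ) (hk : 1 < k) (ϑ α : ℝ) (hϑ : 0 < ϑ)
    (hα : α = 4 * (1 - ((k : ℝ) ^ 2)⁻¹))
    (J : ℝ × ℝ → ℝ) (hJ : ContDiff ℝ 2 J)
    (F1 F2 : ℝ → ℝ) (hF1 : Differentiable ℝ F1) (hF2 : Differentiable ℝ F2)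
    (hW : ∀ z : ℝ, F1 z * deriv F2 z - deriv F1 z * F2 z = -1) (x : ℝ × ℝ) :
    dot2 (∑ p ∈ Finset.univ.filter (fun p : Fin 4 × Fin 4 => p.1 < p.2),
        avgCoeff k p.1 p.2 •
          lieBracket (esVF (ϑ * α) F1 F2 J p.1) (esVF (ϑ * α) F1 F2 J p.2) x)
      (grad2 J x)
      = -ϑ * dot2 (grad2 J x) (grad2 J x) := by
  have hk2 : (2:ℝ) ≤ (k:ℝ) := by exact_mod_cast hk
  have hαpos : 0 < α := by
    rw [hα]
    have h1 : (1:ℝ) ≤ (k:ℝ)^2 := by nlinarith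
    have : ((k:ℝ)^2)⁻¹ ≤ 1 := by
      rw [inv_le_one_iff₀]; right; exact h1
    have h0 : (0:ℝ) < (k:ℝ)^2 := by nlinarith
    have : ((k:ℝ)^2)⁻¹ < 1 := by
      rw [inv_lt_one_iff₀]; right; nlinarith
    linarith
  have hsq : Real.sqrt (ϑ*α) * Real.sqrt (ϑ*α) = ϑ*α :=
    Real.mul_self_sqrt (by positivity)
  have hJx : HasFDerivAt J (fderiv ℝ J x) x :=
    ((hJ.differentiable (by norm_num)) x).hasFDerivAt
  -- vector field derivatives
  have e0 : esVF (ϑ*α) F1 F2 J 0 = fun y => (Real.sqrt (ϑ*α) * F1 (J y), (0:ℝ)) := rfl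
  have e1 : esVF (ϑ*α) F1 F2 J 1 = fun y => (Real.sqrt (ϑ*α) * F2 (J y), (0:ℝ)) := rfl
  have e2 : esVF (ϑ*α) F1 F2 J 2 = fun y => ((0:ℝ), Real.sqrt (ϑ*α) * F1 (J y)) := rfl
  have e3 : esVF (ϑ*α) F1 F2 J 3 = fun y => ((0:ℝ), Real.sqrt (ϑ*α) * F2 (J y)) := rfl
  have hc1 : HasFDerivAt (fun y => Real.sqrt (ϑ*α) * F1 (J y))
      (Real.sqrt (ϑ*α) • ((deriv F1 (J x)) • fderiv ℝ J x)) x :=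
    ((hF1 (J x)).hasDerivAt.comp_hasFDerivAt x hJx).const_mul _
  have hc2 : HasFDerivAt (fun y => Real.sqrt (ϑ*α) * F2 (J y))
      (Real.sqrt (ϑ*α) • ((deriv F2 (J x)) • fderiv ℝ J x)) x :=
    ((hF2 (J x)).hasDerivAt.comp_hasFDerivAt x hJx).const_mul _
  have hf0 : fderiv ℝ (fun y => (Real.sqrt (ϑ*α) * F1 (J y), (0:ℝ))) x
      = (Real.sqrt (ϑ*α) • ((deriv F1 (J x)) • fderiv ℝ J x)).prod 0 :=
    (hc1.prodMk (hasFDerivAt_const (0:ℝ) x)).fderiv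
  have hf1 : fderiv ℝ (fun y => (Real.sqrt (ϑ*α) * F2 (J y), (0:ℝ))) x
      = (Real.sqrt (ϑ*α) • ((deriv F2 (J x)) • fderiv ℝ J x)).prod 0 :=
    (hc2.prodMk (hasFDerivAt_const (0:ℝ) x)).fderiv
  have hf2 : fderiv ℝ (fun y => ((0:ℝ), Real.sqrt (ϑ*α) * F1 (J y))) x
      = ContinuousLinearMap.prod 0 (Real.sqrt (ϑ*α) • ((deriv F1 (J x)) • fderiv ℝ J x)) :=
    ((hasFDerivAt_const (0:ℝ) x).prodMk hc1).fderiv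
  have hf3 : fderiv ℝ (fun y => ((0:ℝ), Real.sqrt (ϑ*α) * F2 (J y))) x
      = ContinuousLinearMap.prod 0 (Real.sqrt (ϑ*α) • ((deriv F2 (J x)) • fderiv ℝ J x)) :=
    ((hasFDerivAt_const (0:ℝ) x).prodMk hc2).fderiv
  have hsum : (Finset.univ.filter (fun p : Fin 4 × Fin 4 => p.1 < p.2))
      = {((0:Fin 4),(1:Fin 4)), (0,2), (0,3), (1,2), (1,3), (2,3)} := by decide
  rw [hsum]
  rw [Finset.sum_insert (by decide), Finset.sum_insert (by decide),
    Finset.sum_insert (by decide), Finset.sum_insert (by decide),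
    Finset.sum_insert (by decide), Finset.sum_singleton]
  simp only [lieBracket, e0, e1, e2, e3]
  simp only [hf0, hf1, hf2, hf3]
  simp only [ContinuousLinearMap.prod_apply, ContinuousLinearMap.smul_apply,
    ContinuousLinearMap.zero_apply, smul_eq_mul,
    grad2, dot2, Prod.fst_sub, Prod.snd_sub, Prod.fst_add, Prod.snd_add,
    Prod.smul_fst, Prod.smul_snd, Prod.mk_sub_mk]
  rw [apply_pair (fderiv ℝ J x) (Real.sqrt (ϑ*α) * F1 (J x)) 0,
      apply_pair (fderiv ℝ J x) (Real.sqrt (ϑ*α) * F2 (J x)) 0,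
      apply_pair (fderiv ℝ J x) 0 (Real.sqrt (ϑ*α) * F1 (J x)),
      apply_pair (fderiv ℝ J x) 0 (Real.sqrt (ϑ*α) * F2 (J x))]
  rw [nu01 k hk, nu03 k hk, nu12 k hk, nu23 k hk]
  have hW' := hW (J x)
  have hK0 : (k:ℝ) ≠ 0 := by intro h; rw [h] at hk2; linarith
  have hK1 : (4:ℝ)*((k:ℝ)^2-1) ≠ 0 := by nlinarith
  have hN : ((k:ℝ)^2/(4*((k:ℝ)^2-1))) * α = 1 := by
    rw [hα]; field_simp
    have h' : (-1 + (k:ℝ)^2) ≠ 0 := by nlinarith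
    linear_combination mul_inv_cancel₀ h'
  linear_combination (((k:ℝ)^2/(4*((k:ℝ)^2-1))) * ((fderiv ℝ J x) (1,0)*(fderiv ℝ J x) (1,0) + (fderiv ℝ J x) (0,1)*(fderiv ℝ J x) (0,1)) * (Real.sqrt (ϑ*α)*Real.sqrt (ϑ*α)))*hW'
    - (((k:ℝ)^2/(4*((k:ℝ)^2-1))) * ((fderiv ℝ J x) (1,0)*(fderiv ℝ J x) (1,0) + (fderiv ℝ J x) (0,1)*(fderiv ℝ J x) (0,1)))*hsq - (ϑ*((fderiv ℝ J x) (1,0)*(fderiv ℝ J x) (1,0) + (fderiv ℝ J x) (0,1)*(fderiv ℝ J x) (0,1)))*hN
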